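/- Let S = {v, w, x, y, z} and consider the type D datum over A⊗A⊗A (the three tensor factors labeled ρ, σ, τ) whose only nonzero coefficients are: a(v,y) = ρ₁⊗σ₃⊗τ₁₂₃ + ρ₁₂₃⊗σ₁₂₃⊗τ₁₂₃; a(v,x) = ρ₃⊗1⊗1; a(v,z) = 1⊗1⊗τ₃; a(w,y) = ρ₁⊗σ₃⊗τ₁ + ρ₁₂₃⊗σ₁₂₃⊗τ₁; a(w,x) = ρ₃⊗σ₁₂⊗1; a(x,v) = ρ₂⊗σ₁₂⊗1; a(x,w) = ρ₂⊗1⊗1; a(x,y) = 1⊗σ₁⊗τ₃; a(y,x) = 1⊗σ₂⊗τ₂; a(y,z) = ρ₂⊗σ₂⊗1; a(z,y) = ρ₃⊗σ₁⊗1; a(z,w) = 1⊗1⊗τ₂. Then this datum satisfies the type D structure relation: for all u, u' ∈ S, Σ_{v'∈S} a(u,v')·a(v',u') = 0 in A⊗A⊗A. (This is the differential of the type D trimodule CFD³ of the trivial S¹-bundle over the pair of pants in the middle spin^c structure, Theorem 1 of the paper.) -/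

import Mathlib

/-!
The torus algebra `A` over `F₂ = ZMod 2` is the 8-dimensional algebra with basis
(indexed by `Fin 8`): `0 ↦ ι₀, 1 ↦ ι₁, 2 ↦ ρ₁, 3 ↦ ρ₂, 4 ↦ ρ₃, 5 ↦ ρ₁₂, 6 ↦ ρ₂₃, 7 ↦ ρ₁₂₃`.
We represent elements of `A` as coordinate vectors `Fin 8 → ZMod 2`, and elements of the
threefold tensor product `A ⊗ A ⊗ A` as `Fin 8 → Fin 8 → Fin 8 → ZMod 2` (coordinates in
the basis of pure tensors of basis elements), with the induced componentwise multiplication.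
-/

/-- Structure constants of the torus algebra: `torusC i j k` is the coefficient of the basis
element `k` in the product of the basis elements `i` and `j`.  The nonzero products are
`ι₀ι₀ = ι₀`, `ι₁ι₁ = ι₁`, `ι₀ρ₁ = ρ₁ι₁ = ρ₁`, `ι₁ρ₂ = ρ₂ι₀ = ρ₂`, `ι₀ρ₃ = ρ₃ι₁ = ρ₃`,
`ι₀ρ₁₂ = ρ₁₂ι₀ = ρ₁₂`, `ι₁ρ₂₃ = ρ₂₃ι₁ = ρ₂₃`, `ι₀ρ₁₂₃ = ρ₁₂₃ι₁ = ρ₁₂₃`,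
`ρ₁ρ₂ = ρ₁₂`, `ρ₂ρ₃ = ρ₂₃`, `ρ₁ρ₂₃ = ρ₁₂ρ₃ = ρ₁₂₃`. -/
def torusC (i j k : Fin 8) : ZMod 2 :=
  if (i.val, j.val, k.val) ∈
      ([(0,0,0), (1,1,1),
        (0,2,2), (2,1,2), (1,3,3), (3,0,3), (0,4,4), (4,1,4),
        (0,5,5), (5,0,5), (1,6,6), (6,1,6), (0,7,7), (7,1,7),
        (2,3,5), (3,4,6), (2,6,7), (5,4,7)] : List (ℕ × ℕ × ℕ))
  then 1 else 0

/-- Elements of the torus algebra `A`, as coordinate vectors in the basis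
`ι₀, ι₁, ρ₁, ρ₂, ρ₃, ρ₁₂, ρ₂₃, ρ₁₂₃`. -/
abbrev TorusAlg := Fin 8 → ZMod 2

/-- The `n`-th basis element of the torus algebra. -/
def bas (n : ℕ) : TorusAlg := fun j => if j.val = n then 1 else 0

/-- The unit `1 = ι₀ + ι₁` of the torus algebra. -/
def oneA : TorusAlg := bas 0 + bas 1
def r1 : TorusAlg := bas 2
def r2 : TorusAlg := bas 3
def r3 : TorusAlg := bas 4
def r12 : TorusAlg := bas 5
def r23 : TorusAlg := bas 6
def r123 : TorusAlg := bas 7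

/-- Elements of `A ⊗ A ⊗ A` (the three tensor factors labeled ρ, σ, τ). -/
abbrev T3 := Fin 8 → Fin 8 → Fin 8 → ZMod 2

/-- The pure tensor `x ⊗ y ⊗ z` in `A ⊗ A ⊗ A`. -/
def tp3 (x y z : TorusAlg) : T3 := fun i j k => x i * y j * z k

/-- Multiplication on `A ⊗ A ⊗ A`, componentwise in the three tensor factors. -/
def mul3 (x y : T3) : T3 := fun k₁ k₂ k₃ =>
  ∑ i₁ : Fin 8, ∑ i₂ : Fin 8, ∑ i₃ : Fin 8, ∑ j₁ : Fin 8, ∑ j₂ : Fin 8, ∑ j₃ : Fin 8,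
    x i₁ i₂ i₃ * y j₁ j₂ j₃ * (torusC i₁ j₁ k₁ * torusC i₂ j₂ k₂ * torusC i₃ j₃ k₃)

/-- The five generators of the type `D` trimodule `CFD³(𝒴_P)` of the trivial `S¹`-bundle over
the pair of pants in the middle spin^c structure. -/
inductive Gen | v | w | x | y | z
  deriving DecidableEq

instance : Fintype Gen :=
  ⟨{Gen.v, Gen.w, Gen.x, Gen.y, Gen.z}, fun a => by cases a <;> simp⟩

open Gen in
/-- The coefficients of the differential of the trimodule of Theorem 1: `coeff u u'` is the
coefficient in `A ⊗ A ⊗ A` of `u'` in `∂ u`. -/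
def coeff : Gen → Gen → T3
  | v, y => tp3 r1 r3 r123 + tp3 r123 r123 r123
  | v, x => tp3 r3 oneA oneA
  | v, z => tp3 oneA oneA r3
  | w, y => tp3 r1 r3 r1 + tp3 r123 r123 r1
  | w, x => tp3 r3 r12 oneA
  | x, v => tp3 r2 r12 oneA
  | x, w => tp3 r2 oneA oneA
  | x, y => tp3 oneA r1 r3
  | y, x => tp3 oneA r2 r2
  | y, z => tp3 r2 r2 oneA
  | z, y => tp3 r3 r1 oneA
  | z, w => tp3 oneA oneA r2
  | _, _ => 0


/-- Multiplication on the torus algebra induced by the structure constants. -/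
def mulA (a b : TorusAlg) : TorusAlg := fun k => ∑ i : Fin 8, ∑ j : Fin 8, a i * b j * torusC i j k

lemma sum_factor3 {R} [CommSemiring R] (A B C : Fin 8 → Fin 8 → R) :
    (∑ i1 : Fin 8, ∑ i2 : Fin 8, ∑ i3 : Fin 8, ∑ j1 : Fin 8, ∑ j2 : Fin 8, ∑ j3 : Fin 8,
      A i1 j1 * B i2 j2 * C i3 j3)
    = (∑ i : Fin 8, ∑ j : Fin 8, A i j) * (∑ i : Fin 8, ∑ j : Fin 8, B i j)
      * (∑ i : Fin 8, ∑ j : Fin 8, C i j) := by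
  simp only [Finset.sum_mul, Finset.mul_sum, ← Finset.sum_product', Finset.univ_product_univ]
  exact Fintype.sum_equiv
    ⟨fun x => ((x.2.2.1, x.2.2.2.2.2), (x.2.1, x.2.2.2.2.1), (x.1, x.2.2.2.1)),
     fun y => (y.2.2.1, y.2.1.1, y.1.1, y.2.2.2, y.2.1.2, y.1.2),
     fun x => rfl, fun y => rfl⟩ _ _ (fun x => rfl)

lemma mul3_tp3 (a b c d e f : TorusAlg) :
    mul3 (tp3 a b c) (tp3 d e f) = tp3 (mulA a d) (mulA b e) (mulA c f) := by
  funext k1 k2 k3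
  have h := sum_factor3 (fun i j => a i * d j * torusC i j k1)
    (fun i j => b i * e j * torusC i j k2) (fun i j => c i * f j * torusC i j k3)
  simp only [mul3, tp3, mulA]
  rw [← h]
  exact Finset.sum_congr rfl fun i1 _ => Finset.sum_congr rfl fun i2 _ =>
    Finset.sum_congr rfl fun i3 _ => Finset.sum_congr rfl fun j1 _ =>
    Finset.sum_congr rfl fun j2 _ => Finset.sum_congr rfl fun j3 _ => by ring

lemma mul3_zero_left (z : T3) : mul3 0 z = 0 := by
  funext k1 k2 k3; simp [mul3]

lemma mul3_zero_right (z : T3) : mul3 z 0 = 0 := by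
  funext k1 k2 k3; simp [mul3]

lemma mul3_add_left (x y z : T3) : mul3 (x + y) z = mul3 x z + mul3 y z := by
  funext k1 k2 k3; simp [mul3, add_mul, Finset.sum_add_distrib]

lemma mul3_add_right (x y z : T3) : mul3 z (x + y) = mul3 z x + mul3 z y := by
  funext k1 k2 k3; simp [mul3, mul_add, add_mul, Finset.sum_add_distrib]

lemma mulA_one_one : mulA oneA oneA = oneA := by decide
lemma mulA_one_r1 : mulA oneA r1 = r1 := by decide
lemma mulA_one_r2 : mulA oneA r2 = r2 := by decide
lemma mulA_one_r3 : mulA oneA r3 = r3 := by decide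
lemma mulA_one_r12 : mulA oneA r12 = r12 := by decide
lemma mulA_one_r123 : mulA oneA r123 = r123 := by decide
lemma mulA_r1_one : mulA r1 oneA = r1 := by decide
lemma mulA_r2_one : mulA r2 oneA = r2 := by decide
lemma mulA_r3_one : mulA r3 oneA = r3 := by decide
lemma mulA_r12_one : mulA r12 oneA = r12 := by decide
lemma mulA_r123_one : mulA r123 oneA = r123 := by decide
lemma mulA_r1_r1 : mulA r1 r1 = 0 := by decide
lemma mulA_r1_r2 : mulA r1 r2 = r12 := by decide
lemma mulA_r1_r3 : mulA r1 r3 = 0 := by decide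
lemma mulA_r1_r12 : mulA r1 r12 = 0 := by decide
lemma mulA_r1_r123 : mulA r1 r123 = 0 := by decide
lemma mulA_r2_r1 : mulA r2 r1 = 0 := by decide
lemma mulA_r2_r2 : mulA r2 r2 = 0 := by decide
lemma mulA_r2_r3 : mulA r2 r3 = r23 := by decide
lemma mulA_r2_r12 : mulA r2 r12 = 0 := by decide
lemma mulA_r2_r123 : mulA r2 r123 = 0 := by decide
lemma mulA_r3_r1 : mulA r3 r1 = 0 := by decide
lemma mulA_r3_r2 : mulA r3 r2 = 0 := by decide
lemma mulA_r3_r3 : mulA r3 r3 = 0 := by decide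
lemma mulA_r3_r12 : mulA r3 r12 = 0 := by decide
lemma mulA_r3_r123 : mulA r3 r123 = 0 := by decide
lemma mulA_r12_r1 : mulA r12 r1 = 0 := by decide
lemma mulA_r12_r2 : mulA r12 r2 = 0 := by decide
lemma mulA_r12_r3 : mulA r12 r3 = r123 := by decide
lemma mulA_r12_r12 : mulA r12 r12 = 0 := by decide
lemma mulA_r12_r123 : mulA r12 r123 = 0 := by decide
lemma mulA_r123_r1 : mulA r123 r1 = 0 := by decide
lemma mulA_r123_r2 : mulA r123 r2 = 0 := by decide
lemma mulA_r123_r3 : mulA r123 r3 = 0 := by decide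
lemma mulA_r123_r12 : mulA r123 r12 = 0 := by decide
lemma mulA_r123_r123 : mulA r123 r123 = 0 := by decide

lemma sumGen (f : Gen → T3) : ∑ g : Gen, f g = f .v + f .w + f .x + f .y + f .z := by
  rw [show (Finset.univ : Finset Gen) = {Gen.v, Gen.w, Gen.x, Gen.y, Gen.z} from rfl,
    Finset.sum_insert (by decide), Finset.sum_insert (by decide),
    Finset.sum_insert (by decide), Finset.sum_insert (by decide), Finset.sum_singleton]
  abel

lemma tp3_zero_left (y z : TorusAlg) : tp3 0 y z = 0 := by
  funext; simp [tp3]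
lemma tp3_zero_mid (y z : TorusAlg) : tp3 y 0 z = 0 := by
  funext; simp [tp3]
lemma tp3_zero_right (y z : TorusAlg) : tp3 y z 0 = 0 := by
  funext; simp [tp3]

/-- The trimodule `CFD³(𝒴_P)` of Theorem 1 satisfies the type `D` structure relation:
the differential squares to zero, i.e. for all generators `u, u'`, the sum over intermediate
generators of the products of coefficients vanishes in `A ⊗ A ⊗ A`. -/
theorem pairOfPants_trimodule_typeD_relation :
    ∀ u u' : Gen, (∑ v' : Gen, mul3 (coeff u v') (coeff v' u')) = 0 := by
  intro u u'
  cases u <;> cases u' <;>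
    simp only [sumGen, coeff, mul3_zero_left, mul3_zero_right, mul3_add_left, mul3_add_right,
      mul3_tp3, mulA_one_one, mulA_one_r1, mulA_one_r2, mulA_one_r3, mulA_one_r12,
      mulA_one_r123, mulA_r1_one, mulA_r2_one, mulA_r3_one, mulA_r12_one, mulA_r123_one,
      mulA_r1_r1, mulA_r1_r2, mulA_r1_r3, mulA_r1_r12, mulA_r1_r123,
      mulA_r2_r1, mulA_r2_r2, mulA_r2_r3, mulA_r2_r12, mulA_r2_r123,
      mulA_r3_r1, mulA_r3_r2, mulA_r3_r3, mulA_r3_r12, mulA_r3_r123,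
      mulA_r12_r1, mulA_r12_r2, mulA_r12_r3, mulA_r12_r12, mulA_r12_r123,
      mulA_r123_r1, mulA_r123_r2, mulA_r123_r3, mulA_r123_r12, mulA_r123_r123,
      tp3_zero_left, tp3_zero_mid, tp3_zero_right, add_zero, zero_add]
  all_goals decide
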